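/- Let K₁, K₂, K₃ be invertible n×n matrices, N an n×n matrix, and F an n×n matrix such that ‖F Kⱼ⁻¹‖ < 1 for j = 2, 3 and ‖K₁⁻¹ F‖ < 1. Define U₃ = K₁ K₂ (N K₂⁻¹ N − (I − F K₃⁻¹)⁻¹ N K₂⁻¹ (I − F K₂⁻¹)⁻¹ N (I − K₁⁻¹ F)⁻¹). Then ‖U₃‖ ≤ ‖K₁‖ ‖K₂‖ ‖N‖² ‖F‖ ‖K₂⁻¹‖ [‖K₁⁻¹‖ + ‖K₂⁻¹‖/(1 − ‖F‖‖K₂⁻¹‖) + ‖K₃⁻¹‖/((1 − ‖F‖‖K₃⁻¹‖)(1 − ‖F‖‖K₂⁻¹‖))] · 1/(1 − ‖K₁⁻¹‖‖F‖), provided also ‖F‖·‖Kⱼ⁻¹‖ < 1 for j = 2, 3 and ‖K₁⁻¹‖·‖F‖ < 1. -/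

import Mathlib

open scoped Matrix.Norms.L2Operator

private lemma norm_one_le_aux {n : Type*} [Fintype n] [DecidableEq n] :
    ‖(1 : Matrix n n ℂ)‖ ≤ 1 := by
  rw [Matrix.cstar_norm_def, map_one, ContinuousLinearMap.one_def]
  exact ContinuousLinearMap.norm_id_le

private lemma inv_norm_le_aux {n : Type*} [Fintype n] [DecidableEq n]
    {x : Matrix n n ℂ} (hx : ‖x‖ < 1) : ‖(1 - x)⁻¹‖ ≤ (1 - ‖x‖)⁻¹ := by
  have hu : IsUnit (1 - x) := isUnit_one_sub_of_norm_lt_one hx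
  have hkey : (1 - x)⁻¹ * (1 - x) = 1 := by
    rw [Matrix.nonsing_inv_eq_ringInverse]
    exact Ring.inverse_mul_cancel _ hu
  have hid : (1 - x)⁻¹ = 1 + (1 - x)⁻¹ * x := by
    have h := hkey
    rw [mul_sub, mul_one] at h
    exact sub_eq_iff_eq_add.mp h
  have h1 : ‖(1 - x)⁻¹‖ ≤ 1 + ‖(1 - x)⁻¹‖ * ‖x‖ := by
    calc ‖(1 - x)⁻¹‖ = ‖1 + (1 - x)⁻¹ * x‖ := by rw [← hid]
    _ ≤ ‖(1 : Matrix n n ℂ)‖ + ‖(1 - x)⁻¹ * x‖ := norm_add_le _ _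
    _ ≤ 1 + ‖(1 - x)⁻¹‖ * ‖x‖ := add_le_add norm_one_le_aux (norm_mul_le _ _)
  have hpos : (0 : ℝ) < 1 - ‖x‖ := by linarith
  have h2 : ‖(1 - x)⁻¹‖ * (1 - ‖x‖) ≤ 1 := by nlinarith [norm_nonneg ((1 - x)⁻¹)]
  calc ‖(1 - x)⁻¹‖ = ‖(1 - x)⁻¹‖ * (1 - ‖x‖) * (1 - ‖x‖)⁻¹ := by field_simp
    _ ≤ 1 * (1 - ‖x‖)⁻¹ := mul_le_mul_of_nonneg_right h2 (by positivity)
    _ = (1 - ‖x‖)⁻¹ := one_mul _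

private lemma one_sub_inv_aux {n : Type*} [Fintype n] [DecidableEq n]
    {x : Matrix n n ℂ} (hx : ‖x‖ < 1) : 1 - (1 - x)⁻¹ = -(x * (1 - x)⁻¹) := by
  have hu : IsUnit (1 - x) := isUnit_one_sub_of_norm_lt_one hx
  have hkey : (1 - x) * (1 - x)⁻¹ = 1 := by
    rw [Matrix.nonsing_inv_eq_ringInverse]
    exact Ring.mul_inverse_cancel _ hu
  rw [sub_mul, one_mul] at hkey
  set y := (1 - x)⁻¹ with hy
  rw [← hkey]; abel

private lemma one_sub_inv_aux' {n : Type*} [Fintype n] [DecidableEq n]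
    {x : Matrix n n ℂ} (hx : ‖x‖ < 1) : 1 - (1 - x)⁻¹ = -((1 - x)⁻¹ * x) := by
  have hu : IsUnit (1 - x) := isUnit_one_sub_of_norm_lt_one hx
  have hkey : (1 - x)⁻¹ * (1 - x) = 1 := by
    rw [Matrix.nonsing_inv_eq_ringInverse]
    exact Ring.inverse_mul_cancel _ hu
  rw [mul_sub, mul_one] at hkey
  set y := (1 - x)⁻¹ with hy
  rw [← hkey]; abel

set_option maxHeartbeats 1000000 in
theorem U3_bound {n : Type*} [Fintype n] [DecidableEq n]
    (K₁ K₂ K₃ N F : Matrix n n ℂ)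
    (hK₁ : IsUnit K₁) (hK₂ : IsUnit K₂) (hK₃ : IsUnit K₃)
    (h₂ : ‖F * K₂⁻¹‖ < 1) (h₃ : ‖F * K₃⁻¹‖ < 1) (h₁ : ‖K₁⁻¹ * F‖ < 1)
    (h₂' : ‖F‖ * ‖K₂⁻¹‖ < 1) (h₃' : ‖F‖ * ‖K₃⁻¹‖ < 1) (h₁' : ‖K₁⁻¹‖ * ‖F‖ < 1) :
    ‖K₁ * K₂ * (N * K₂⁻¹ * N -
        (1 - F * K₃⁻¹)⁻¹ * N * K₂⁻¹ * (1 - F * K₂⁻¹)⁻¹ * N * (1 - K₁⁻¹ * F)⁻¹)‖ ≤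
      ‖K₁‖ * ‖K₂‖ * ‖N‖ ^ 2 * ‖F‖ * ‖K₂⁻¹‖ *
        (‖K₁⁻¹‖ + ‖K₂⁻¹‖ / (1 - ‖F‖ * ‖K₂⁻¹‖) +
          ‖K₃⁻¹‖ / ((1 - ‖F‖ * ‖K₃⁻¹‖) * (1 - ‖F‖ * ‖K₂⁻¹‖))) *
        (1 / (1 - ‖K₁⁻¹‖ * ‖F‖)) := by
  set A := (1 - F * K₃⁻¹)⁻¹ with hA
  set B := (1 - F * K₂⁻¹)⁻¹ with hB
  set C := (1 - K₁⁻¹ * F)⁻¹ with hC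
  -- norm bounds on the resolvents
  have hnA : ‖A‖ ≤ (1 - ‖F‖ * ‖K₃⁻¹‖)⁻¹ := by
    refine (inv_norm_le_aux h₃).trans ?_
    gcongr
    exact norm_mul_le _ _
  have hnB : ‖B‖ ≤ (1 - ‖F‖ * ‖K₂⁻¹‖)⁻¹ := by
    refine (inv_norm_le_aux h₂).trans ?_
    gcongr
    exact norm_mul_le _ _
  have hnC : ‖C‖ ≤ (1 - ‖K₁⁻¹‖ * ‖F‖)⁻¹ := by
    refine (inv_norm_le_aux h₁).trans ?_
    gcongr
    exact norm_mul_le _ _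
  -- algebraic decomposition
  have key : N * K₂⁻¹ * N - A * N * K₂⁻¹ * B * N * C
      = N * K₂⁻¹ * ((1 - B) * (N * C)) + (1 - A) * (N * (K₂⁻¹ * (B * (N * C))))
        + N * K₂⁻¹ * N * (1 - C) := by
    noncomm_ring
  have h1B : (1 : Matrix n n ℂ) - B = -(F * K₂⁻¹ * B) := by
    rw [hB]; exact one_sub_inv_aux h₂
  have h1A : (1 : Matrix n n ℂ) - A = -(F * K₃⁻¹ * A) := by
    rw [hA]; exact one_sub_inv_aux h₃
  have h1C : (1 : Matrix n n ℂ) - C = -(C * (K₁⁻¹ * F)) := by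
    rw [hC]; exact one_sub_inv_aux' h₁
  -- abbreviations for norms
  set f := ‖F‖ with hf
  set b₁ := ‖K₁⁻¹‖ with hb₁
  set b₂ := ‖K₂⁻¹‖ with hb₂
  set b₃ := ‖K₃⁻¹‖ with hb₃
  have hf0 : 0 ≤ f := norm_nonneg _
  have hb₁0 : 0 ≤ b₁ := norm_nonneg _
  have hb₂0 : 0 ≤ b₂ := norm_nonneg _
  have hb₃0 : 0 ≤ b₃ := norm_nonneg _
  have hN0 : 0 ≤ ‖N‖ := norm_nonneg _
  have hd₂ : (0 : ℝ) < 1 - f * b₂ := by linarith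
  have hd₃ : (0 : ℝ) < 1 - f * b₃ := by linarith
  have hd₁ : (0 : ℝ) < 1 - b₁ * f := by linarith
  have hnA0 : 0 ≤ ‖A‖ := norm_nonneg _
  have hnB0 : 0 ≤ ‖B‖ := norm_nonneg _
  have hnC0 : 0 ≤ ‖C‖ := norm_nonneg _
  -- bound each of the three pieces
  have hNC : ‖N * C‖ ≤ ‖N‖ * ‖C‖ := norm_mul_le _ _
  have ht1 : ‖N * K₂⁻¹ * ((1 - B) * (N * C))‖ ≤ ‖N‖ * b₂ * (f * b₂ * ‖B‖ * (‖N‖ * ‖C‖)) := by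
    refine (norm_mul_le _ _).trans ?_
    have h1 : ‖(1 - B) * (N * C)‖ ≤ f * b₂ * ‖B‖ * (‖N‖ * ‖C‖) := by
      refine (norm_mul_le _ _).trans ?_
      have h2 : ‖(1 : Matrix n n ℂ) - B‖ ≤ f * b₂ * ‖B‖ := by
        rw [h1B, norm_neg]
        exact (norm_mul_le _ _).trans
          (mul_le_mul_of_nonneg_right (norm_mul_le _ _) (norm_nonneg _))
      exact mul_le_mul h2 hNC (norm_nonneg _)
        (mul_nonneg (mul_nonneg hf0 hb₂0) hnB0)
    have h3 : ‖N * K₂⁻¹‖ ≤ ‖N‖ * b₂ := norm_mul_le _ _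
    exact mul_le_mul h3 h1 (norm_nonneg _) (mul_nonneg hN0 hb₂0)
  have ht2 : ‖(1 - A) * (N * (K₂⁻¹ * (B * (N * C))))‖
      ≤ f * b₃ * ‖A‖ * (‖N‖ * (b₂ * (‖B‖ * (‖N‖ * ‖C‖)))) := by
    refine (norm_mul_le _ _).trans ?_
    have h2 : ‖(1 : Matrix n n ℂ) - A‖ ≤ f * b₃ * ‖A‖ := by
      rw [h1A, norm_neg]
      exact (norm_mul_le _ _).trans
        (mul_le_mul_of_nonneg_right (norm_mul_le _ _) (norm_nonneg _))
    have h4 : ‖N * (K₂⁻¹ * (B * (N * C)))‖ ≤ ‖N‖ * (b₂ * (‖B‖ * (‖N‖ * ‖C‖))) := by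
      refine (norm_mul_le _ _).trans (mul_le_mul_of_nonneg_left ?_ hN0)
      refine (norm_mul_le _ _).trans (mul_le_mul_of_nonneg_left ?_ hb₂0)
      exact (norm_mul_le _ _).trans (mul_le_mul_of_nonneg_left hNC hnB0)
    exact mul_le_mul h2 h4 (norm_nonneg _) (mul_nonneg (mul_nonneg hf0 hb₃0) hnA0)
  have ht3 : ‖N * K₂⁻¹ * N * (1 - C)‖ ≤ ‖N‖ * b₂ * ‖N‖ * (‖C‖ * (b₁ * f)) := by
    refine (norm_mul_le _ _).trans ?_
    have h2 : ‖(1 : Matrix n n ℂ) - C‖ ≤ ‖C‖ * (b₁ * f) := by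
      rw [h1C, norm_neg]
      exact (norm_mul_le _ _).trans
        (mul_le_mul_of_nonneg_left (norm_mul_le _ _) hnC0)
    have h3 : ‖N * K₂⁻¹ * N‖ ≤ ‖N‖ * b₂ * ‖N‖ := by
      exact (norm_mul_le _ _).trans
        (mul_le_mul_of_nonneg_right (norm_mul_le _ _) hN0)
    exact mul_le_mul h3 h2 (norm_nonneg _) (mul_nonneg (mul_nonneg hN0 hb₂0) hN0)
  -- combine
  have hM : ‖N * K₂⁻¹ * N - A * N * K₂⁻¹ * B * N * C‖
      ≤ ‖N‖ ^ 2 * f * b₂ *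
        (b₁ + b₂ * (1 - f * b₂)⁻¹ + b₃ * ((1 - f * b₃)⁻¹ * (1 - f * b₂)⁻¹)) *
        (1 - b₁ * f)⁻¹ := by
    rw [key]
    refine ((norm_add_le _ _).trans (add_le_add (norm_add_le _ _) le_rfl)).trans ?_
    refine (add_le_add (add_le_add ht1 ht2) ht3).trans ?_
    have hA' := hnA
    have hB' := hnB
    have hC' := hnC
    have hα : (0:ℝ) ≤ (1 - f * b₃)⁻¹ := by positivity
    have hβ : (0:ℝ) ≤ (1 - f * b₂)⁻¹ := by positivity
    have hγ : (0:ℝ) ≤ (1 - b₁ * f)⁻¹ := by positivity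
    nlinarith [mul_nonneg hnB0 hnC0, mul_nonneg hnA0 (mul_nonneg hnB0 hnC0),
      mul_nonneg (mul_nonneg hf0 hb₂0) (mul_nonneg hnB0 hnC0),
      mul_nonneg (mul_nonneg hN0 hN0) (mul_nonneg (mul_nonneg hf0 hb₂0) hb₂0),
      mul_nonneg (mul_nonneg hN0 hN0) (mul_nonneg (mul_nonneg hf0 hb₃0) hb₂0),
      mul_nonneg (mul_nonneg hN0 hN0) (mul_nonneg hb₂0 (mul_nonneg hb₁0 hf0)),
      sq_nonneg ‖N‖, mul_le_mul hB' hC' hnC0 hβ,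
      mul_le_mul hA' (mul_le_mul hB' hC' hnC0 hβ) (mul_nonneg hnB0 hnC0) hα]
  calc ‖K₁ * K₂ * (N * K₂⁻¹ * N - A * N * K₂⁻¹ * B * N * C)‖
      ≤ ‖K₁ * K₂‖ * ‖N * K₂⁻¹ * N - A * N * K₂⁻¹ * B * N * C‖ := norm_mul_le _ _
    _ ≤ ‖K₁‖ * ‖K₂‖ *
        (‖N‖ ^ 2 * f * b₂ *
          (b₁ + b₂ * (1 - f * b₂)⁻¹ + b₃ * ((1 - f * b₃)⁻¹ * (1 - f * b₂)⁻¹)) *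
          (1 - b₁ * f)⁻¹) := by
        refine mul_le_mul (norm_mul_le _ _) hM (norm_nonneg _) ?_
        positivity
    _ = ‖K₁‖ * ‖K₂‖ * ‖N‖ ^ 2 * f * b₂ *
        (b₁ + b₂ / (1 - f * b₂) + b₃ / ((1 - f * b₃) * (1 - f * b₂))) *
        (1 / (1 - b₁ * f)) := by
        rw [div_eq_mul_inv, div_eq_mul_inv, mul_inv, one_div]
        ring
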